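/- Sturmian block recursion: define s_0 := b, s_1 := b^{n_1−1}a, s_{k+1} := s_k^{n_{k+1}} s_{k−1} for a sequence (n_k)_{k≥1} of positive integers with n_1 ≥ 1. Then for all k ≥ 2: (a) s_{2k} ends with ab, (b) s_{2k+1} ends with ba, (c) s_k p_{k+1} = s_{k+1} p_k where p_k denotes s_k with its last two letters removed, and (d) p_k is a palindrome. -/

import Mathlib

/-- The Sturmian blocks: `s_0 = b`, `s_1 = b^{n_1 − 1} a`, `s_{k+1} = s_k^{n_{k+1}} s_{k−1}`,
over the alphabet `{a, b} = {true, false}`. -/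
def sturm (n : ℕ → ℕ) : ℕ → List Bool
  | 0 => [false]
  | 1 => List.replicate (n 1 - 1) false ++ [true]
  | k + 2 => (List.replicate (n (k + 2)) (sturm n (k + 1))).flatten ++ sturm n k

/-- `p_k` is `s_k` with its last two letters removed. -/
def pSturm (n : ℕ → ℕ) (k : ℕ) : List Bool := ((sturm n k).dropLast).dropLast

namespace SturmAux

/-- alternating two-letter suffix pattern -/
def t2 (k : ℕ) : List Bool := if Even k then [false, true] else [true, false]

lemma t2_length (k : ℕ) : (t2 k).length = 2 := by
  unfold t2; split <;> rfl

lemma t2_add_two (k : ℕ) : t2 (k + 2) = t2 k := by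
  unfold t2
  simp [Nat.even_add_one, not_not]

/-- the common core word `w_k = dropLast² (s_k s_{k+1})` -/
def wA (n : ℕ → ℕ) : ℕ → List Bool
  | 0 => List.replicate (n 1 - 1) false
  | k + 1 => (List.replicate (n (k + 2)) (sturm n (k + 1))).flatten ++ wA n k

lemma repjoin_succ {α : Type*} (l : List α) (m : ℕ) :
    (List.replicate (m + 1) l).flatten = l ++ (List.replicate m l).flatten := by
  simp [List.replicate_succ]

lemma swap_repjoin {α : Type*} {a b s : List α} (h : a ++ b = s ++ a) (m : ℕ) :
    a ++ (List.replicate m b).flatten = (List.replicate m s).flatten ++ a := by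
  induction m with
  | zero => simp
  | succ m ih =>
    rw [repjoin_succ, repjoin_succ, ← List.append_assoc, h, List.append_assoc, ih,
      ← List.append_assoc]

lemma comm_repjoin {α : Type*} (l : List α) (m : ℕ) :
    l ++ (List.replicate m l).flatten = (List.replicate m l).flatten ++ l :=
  swap_repjoin rfl m

lemma rev_repjoin {α : Type*} (l : List α) (m : ℕ) :
    (List.replicate m l).flatten.reverse = (List.replicate m l.reverse).flatten := by
  induction m with
  | zero => simp
  | succ m ih =>
    rw [repjoin_succ, List.reverse_append, ih, repjoin_succ, comm_repjoin]

lemma sturm_ne_nil (n : ℕ → ℕ) (k : ℕ) : sturm n k ≠ [] := by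
  induction k using Nat.strong_induction_on with
  | _ k ih =>
    match k with
    | 0 => simp [sturm]
    | 1 => simp [sturm]
    | k + 2 =>
      have := ih k (by omega)
      simp [sturm, this]

lemma two_le_len (n : ℕ → ℕ) (hn : ∀ k, 1 ≤ k → 1 ≤ n k) (k : ℕ) :
    2 ≤ (sturm n (k + 2)).length := by
  have h1 : 1 ≤ n (k + 2) := hn _ (by omega)
  have h2 : sturm n (k + 1) ≠ [] := sturm_ne_nil n (k + 1)
  have h3 : sturm n k ≠ [] := sturm_ne_nil n k
  show 2 ≤ ((List.replicate (n (k + 2)) (sturm n (k + 1))).flatten ++ sturm n k).length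
  obtain ⟨m, hm⟩ : ∃ m, n (k + 2) = m + 1 := ⟨n (k + 2) - 1, by omega⟩
  rw [hm, repjoin_succ]
  have l2 := List.length_pos_iff.mpr h2
  have l3 := List.length_pos_iff.mpr h3
  simp only [List.length_append]
  omega

/-- the key structural identities -/
lemma keyL (n : ℕ → ℕ) (k : ℕ) :
    sturm n k ++ sturm n (k + 1) = wA n k ++ t2 k ∧
    sturm n (k + 1) ++ sturm n k = wA n k ++ t2 (k + 1) := by
  induction k with
  | zero =>
    constructor
    · show [false] ++ (List.replicate (n 1 - 1) false ++ [true]) = _ ++ t2 0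
      rw [show t2 0 = [false, true] from rfl]
      show false :: (List.replicate (n 1 - 1) false ++ [true])
          = List.replicate (n 1 - 1) false ++ [false, true]
      rw [← List.cons_append, ← List.replicate_succ, List.replicate_succ', List.append_assoc]
      rfl
    · show (List.replicate (n 1 - 1) false ++ [true]) ++ [false] = _ ++ t2 1
      rw [show t2 1 = [true, false] from rfl]
      simp [wA]
  | succ k ih =>
    obtain ⟨ih1, ih2⟩ := ih
    have hs2 : sturm n (k + 2) =
        (List.replicate (n (k + 2)) (sturm n (k + 1))).flatten ++ sturm n k := rfl
    constructor
    · rw [hs2, ← List.append_assoc, comm_repjoin, List.append_assoc, ih2]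
      show _ = ((List.replicate (n (k + 2)) (sturm n (k + 1))).flatten ++ wA n k) ++ t2 (k + 1)
      rw [List.append_assoc]
    · rw [hs2, List.append_assoc, ih1, t2_add_two]
      show _ = ((List.replicate (n (k + 2)) (sturm n (k + 1))).flatten ++ wA n k) ++ t2 k
      rw [List.append_assoc]

/-- commutation identities for reversal -/
lemma keyR (n : ℕ → ℕ) (k : ℕ) :
    wA n k ++ (sturm n k).reverse = sturm n k ++ wA n k ∧
    wA n k ++ (sturm n (k + 1)).reverse = sturm n (k + 1) ++ wA n k := by
  induction k with
  | zero =>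
    constructor
    · show List.replicate (n 1 - 1) false ++ [false] = [false] ++ List.replicate (n 1 - 1) false
      rw [← List.replicate_succ', List.singleton_append, ← List.replicate_succ]
    · show List.replicate (n 1 - 1) false ++ (List.replicate (n 1 - 1) false ++ [true]).reverse
        = (List.replicate (n 1 - 1) false ++ [true]) ++ List.replicate (n 1 - 1) false
      rw [List.reverse_append]
      simp
  | succ k ih =>
    obtain ⟨ih1, ih2⟩ := ih
    have hw : wA n (k + 1) =
        (List.replicate (n (k + 2)) (sturm n (k + 1))).flatten ++ wA n k := rfl
    have hs2 : sturm n (k + 2) =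
        (List.replicate (n (k + 2)) (sturm n (k + 1))).flatten ++ sturm n k := rfl
    constructor
    · rw [hw, List.append_assoc, ih2, ← List.append_assoc, ← comm_repjoin, List.append_assoc]
    · rw [hw, hs2, List.reverse_append, rev_repjoin, ← List.append_assoc, List.append_assoc _ _ (sturm n k).reverse,
        ih1, ← List.append_assoc, List.append_assoc, swap_repjoin ih2, ← List.append_assoc,
        List.append_assoc _ _ (wA n k)]

/-- `w_k` is a palindrome -/
lemma wA_pal (n : ℕ → ℕ) (k : ℕ) : (wA n k).reverse = wA n k := by
  induction k with
  | zero => simp [wA]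
  | succ k ih =>
    have hw : wA n (k + 1) =
        (List.replicate (n (k + 2)) (sturm n (k + 1))).flatten ++ wA n k := rfl
    rw [hw, List.reverse_append, rev_repjoin, ih, swap_repjoin (keyR n k).2]

lemma two_split (l : List Bool) (h : 2 ≤ l.length) :
    ∃ x y, l = l.dropLast.dropLast ++ [x, y] := by
  have h1 : l ≠ [] := by intro e; simp [e] at h
  have h2 : l.dropLast ≠ [] := by
    intro e
    have := l.length_dropLast
    rw [e] at this
    simp at this
    omega
  refine ⟨l.dropLast.getLast h2, l.getLast h1, ?_⟩
  conv_lhs => rw [← List.dropLast_concat_getLast h1, ← List.dropLast_concat_getLast h2]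
  simp

lemma key1 (n : ℕ → ℕ) (hn : ∀ k, 1 ≤ k → 1 ≤ n k) (k : ℕ) (hk : 1 ≤ k) :
    sturm n (k + 1) = pSturm n (k + 1) ++ t2 k ∧
    sturm n k ++ pSturm n (k + 1) = wA n k := by
  have hlen : 2 ≤ (sturm n (k + 1)).length := by
    obtain ⟨j, hj⟩ : ∃ j, k + 1 = j + 2 := ⟨k - 1, by omega⟩
    rw [hj]; exact two_le_len n hn j
  obtain ⟨x, y, hxy⟩ := two_split _ hlen
  have hL := (keyL n k).1
  rw [hxy, ← List.append_assoc] at hL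
  obtain ⟨h1, h2⟩ := List.append_inj' hL (by simp [t2_length])
  exact ⟨by rw [pSturm, ← h2, ← hxy], by rw [pSturm, h1]⟩

lemma key2 (n : ℕ → ℕ) (hn : ∀ k, 1 ≤ k → 1 ≤ n k) (k : ℕ) (hk : 2 ≤ k) :
    sturm n (k + 1) ++ pSturm n k = wA n k := by
  have hlen : 2 ≤ (sturm n k).length := by
    obtain ⟨j, hj⟩ : ∃ j, k = j + 2 := ⟨k - 2, by omega⟩
    rw [hj]; exact two_le_len n hn j
  obtain ⟨x, y, hxy⟩ := two_split _ hlen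
  have hL := (keyL n k).2
  rw [hxy, ← List.append_assoc] at hL
  obtain ⟨h1, h2⟩ := List.append_inj' hL (by simp [t2_length])
  rw [pSturm, h1]

lemma pal (n : ℕ → ℕ) (hn : ∀ k, 1 ≤ k → 1 ≤ n k) (k : ℕ) (hk : 2 ≤ k) :
    (pSturm n k).reverse = pSturm n k := by
  have hw : wA n k = sturm n (k + 1) ++ pSturm n k := (key2 n hn k hk).symm
  have hwpal := wA_pal n k
  rw [hw, List.reverse_append] at hwpal
  -- hwpal : (pSturm n k).reverse ++ (sturm n (k+1)).reverse = sturm n (k+1) ++ pSturm n k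
  -- decomposition of s_k and s_{k+1}
  have hsk : sturm n k = pSturm n k ++ t2 (k - 1) := by
    obtain ⟨j, hj⟩ : ∃ j, k = j + 1 := ⟨k - 1, by omega⟩
    have := (key1 n hn j (by omega)).1
    rw [hj]
    simpa [hj] using this
  have hs1 : sturm n (k + 1) = sturm n k ++
      ((List.replicate (n (k + 1) - 1) (sturm n k)).flatten ++ sturm n (k - 1)) := by
    obtain ⟨j, hj⟩ : ∃ j, k = j + 1 := ⟨k - 1, by omega⟩
    subst hj
    show sturm n (j + 2) = _
    have h1 : 1 ≤ n (j + 2) := hn _ (by omega)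
    obtain ⟨m, hm⟩ : ∃ m, n (j + 2) = m + 1 := ⟨n (j + 2) - 1, by omega⟩
    show (List.replicate (n (j + 2)) (sturm n (j + 1))).flatten ++ sturm n j = _
    rw [hm, repjoin_succ]
    simp [hm]
  have htake := congrArg (List.take (pSturm n k).length) hwpal
  rw [← List.length_reverse (as := pSturm n k), List.take_left, List.length_reverse] at htake
  have hle : (pSturm n k).length ≤ (sturm n (k + 1)).length := by
    rw [hs1, hsk]
    simp only [List.length_append]
    omega
  rw [List.take_append_of_le_length hle] at htake
  rw [htake, hs1, hsk]
  rw [List.append_assoc, List.take_append_of_le_length (by simp), List.take_length]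

end SturmAux

open SturmAux in
/-- For all `k ≥ 2`: (a) `s_{2k}` ends with `ab`, (b) `s_{2k+1}` ends with `ba`,
(c) `s_k p_{k+1} = s_{k+1} p_k`, and (d) `p_k` is a palindrome. -/
theorem sturm_block_properties (n : ℕ → ℕ) (hn : ∀ k, 1 ≤ k → 1 ≤ n k) :
    ∀ k : ℕ, 2 ≤ k →
      (sturm n (2 * k) = pSturm n (2 * k) ++ [true, false]) ∧
      (sturm n (2 * k + 1) = pSturm n (2 * k + 1) ++ [false, true]) ∧
      (sturm n k ++ pSturm n (k + 1) = sturm n (k + 1) ++ pSturm n k) ∧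
      ((pSturm n k).reverse = pSturm n k) := by
  intro k hk
  refine ⟨?_, ?_, ?_, ?_⟩
  · have hj : 2 * k = (2 * k - 1) + 1 := by omega
    have := (key1 n hn (2 * k - 1) (by omega)).1
    have ht : t2 (2 * k - 1) = [true, false] := by
      have hmod : (2 * k - 1) % 2 = 1 := by omega
      simp [t2, Nat.even_iff, hmod]
    rw [hj, this, ht]
  · have := (key1 n hn (2 * k) (by omega)).1
    have ht : t2 (2 * k) = [false, true] := by
      have hmod : (2 * k) % 2 = 0 := by omega
      simp [t2, Nat.even_iff, hmod]
    rw [this, ht]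
  · rw [(key1 n hn k (by omega)).2, key2 n hn k hk]
  · exact pal n hn k hk
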